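/- Let Ω ⊂ ℝⁿ be an open bounded set with the Lebesgue measure, let (X,d) be a locally compact Hadamard space, and let p ∈ [1,∞). Then the uniformly continuous maps Ω → X are dense in L^p(Ω,X): for every Lebesgue-measurable f : Ω → X with ∫_Ω d(f(ω),a)^p dω < ∞ for some a ∈ X, and every ε > 0, there exists a uniformly continuous map h : Ω → X such that ∫_Ω d(f(ω),h(ω))^p dω < ε. -/

import Mathlib

open MeasureTheory Set

open Metric Set

lemma properSpace_of_geodesic {X : Type*} [MetricSpace X] [CompleteSpace X]
    [LocallyCompactSpace X]
    (hgeo : ∀ x y : X, ∃ γ : ℝ → X, γ 0 = x ∧ γ 1 = y ∧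
      ∀ s ∈ Icc (0:ℝ) 1, ∀ t ∈ Icc (0:ℝ) 1, dist (γ s) (γ t) = |s - t| * dist x y) :
    ProperSpace X := by
  rcases isEmpty_or_nonempty X with hX | hX
  · exact ⟨fun x r => (IsEmpty.false x).elim⟩
  obtain ⟨a⟩ := hX
  have h0I : (0:ℝ) ∈ Icc (0:ℝ) 1 := ⟨le_refl 0, zero_le_one⟩
  have h1I : (1:ℝ) ∈ Icc (0:ℝ) 1 := ⟨zero_le_one, le_refl 1⟩
  -- key: geodesics give intermediate points
  have mid : ∀ y : X, ∀ r : ℝ, 0 ≤ r → r < dist a y →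
      ∃ z : X, dist a z = r ∧ dist z y = dist a y - r := by
    intro y r hr hd
    obtain ⟨γ, hγ0, hγ1, hγd⟩ := hgeo a y
    have hdpos : 0 < dist a y := lt_of_le_of_lt hr hd
    have ht1 : r / dist a y ∈ Icc (0:ℝ) 1 := by
      constructor
      · positivity
      · rw [div_le_one hdpos]; linarith
    refine ⟨γ (r / dist a y), ?_, ?_⟩
    · have h := hγd 0 h0I (r / dist a y) ht1
      rw [hγ0] at h
      rw [h, zero_sub, abs_neg, abs_of_nonneg ht1.1,
        div_mul_cancel₀ _ (ne_of_gt hdpos)]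
    · have h := hγd (r / dist a y) ht1 1 h1I
      rw [hγ1] at h
      rw [h, abs_of_nonpos (by linarith [ht1.2]), neg_sub, sub_mul, one_mul,
        div_mul_cancel₀ _ (ne_of_gt hdpos)]
  -- local compactness: compact closed balls of some positive radius
  have hloc : ∀ x : X, ∃ r > 0, IsCompact (closedBall x r) := by
    intro x
    obtain ⟨K, hKc, hKn⟩ := exists_compact_mem_nhds x
    obtain ⟨r, hr, hsub⟩ := (Metric.nhds_basis_closedBall (x := x)).mem_iff.1 hKn
    exact ⟨r, hr, hKc.of_isClosed_subset isClosed_closedBall hsub⟩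
  -- step up
  have step_up : ∀ r : ℝ, 0 ≤ r → IsCompact (closedBall a r) →
      ∃ δ > 0, IsCompact (closedBall a (r + δ)) := by
    intro r hr hc
    choose rad hrad hradc using hloc
    obtain ⟨t, _, hcov⟩ := hc.elim_nhds_subcover (fun x => ball x (rad x / 2))
      (fun x _ => ball_mem_nhds x (by linarith [hrad x]))
    have hat : t.Nonempty := by
      rcases mem_iUnion₂.1 (hcov (mem_closedBall_self hr)) with ⟨x, hx, _⟩
      exact ⟨x, hx⟩
    set δ : ℝ := t.inf' hat (fun x => rad x / 2) with hδdef
    have hδpos : 0 < δ := by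
      rw [hδdef, Finset.lt_inf'_iff]
      intro x _; linarith [hrad x]
    refine ⟨δ, hδpos, ?_⟩
    have hsub : closedBall a (r + δ) ⊆ ⋃ x ∈ t, closedBall x (rad x) := by
      intro y hy
      rcases le_or_gt (dist a y) r with hd | hd
      · rcases mem_iUnion₂.1 (hcov (by rwa [mem_closedBall, dist_comm])) with ⟨x, hx, hxy⟩
        refine mem_iUnion₂.2 ⟨x, hx, ?_⟩
        have hxy' : dist x y < rad x / 2 := by rwa [mem_ball, dist_comm] at hxy
        rw [mem_closedBall, dist_comm]
        linarith [hrad x]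
      · have hdle : dist a y ≤ r + δ := by rwa [mem_closedBall, dist_comm] at hy
        obtain ⟨z, hdaz, hzy⟩ := mid y r hr hd
        have hzball : z ∈ closedBall a r := by
          rw [mem_closedBall, dist_comm, hdaz]
        rcases mem_iUnion₂.1 (hcov hzball) with ⟨x, hx, hxz⟩
        refine mem_iUnion₂.2 ⟨x, hx, ?_⟩
        rw [mem_ball, dist_comm] at hxz
        have hδx : δ ≤ rad x / 2 := Finset.inf'_le _ hx
        rw [mem_closedBall, dist_comm]
        calc dist x y ≤ dist x z + dist z y := dist_triangle _ _ _
          _ ≤ rad x / 2 + (dist a y - r) := add_le_add (le_of_lt hxz) (le_of_eq hzy)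
          _ ≤ rad x := by linarith
    exact IsCompact.of_isClosed_subset
      (t.finite_toSet.isCompact_biUnion (fun x _ => hradc x)) isClosed_closedBall hsub
  -- limit step
  have limit : ∀ r : ℝ, 0 < r → (∀ r' : ℝ, r' < r → IsCompact (closedBall a r')) →
      IsCompact (closedBall a r) := by
    intro r hrpos hlt
    refine TotallyBounded.isCompact_of_isClosed ?_ isClosed_closedBall
    rw [Metric.totallyBounded_iff]
    intro ε hε
    set r' : ℝ := max 0 (r - ε / 2) with hr'def
    have hr'lt : r' < r := by
      rw [hr'def, max_lt_iff]; constructor <;> linarith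
    have hr'0 : 0 ≤ r' := le_max_left _ _
    have hcomp : IsCompact (closedBall a r') := hlt r' hr'lt
    obtain ⟨s, hsfin, hscov⟩ := Metric.totallyBounded_iff.1 hcomp.totallyBounded
      (ε / 2) (by linarith)
    refine ⟨s, hsfin, ?_⟩
    intro y hy
    rcases le_or_gt (dist a y) r' with hd | hd
    · have : y ∈ ⋃ z ∈ s, ball z (ε / 2) :=
        hscov (by rwa [mem_closedBall, dist_comm])
      rcases mem_iUnion₂.1 this with ⟨z, hz, hzy⟩
      refine mem_iUnion₂.2 ⟨z, hz, ?_⟩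
      exact mem_ball.2 (lt_of_lt_of_le (mem_ball.1 hzy) (by linarith))
    · obtain ⟨z, hdaz, hzy⟩ := mid y r' hr'0 hd
      have hdley : dist a y ≤ r := by rwa [mem_closedBall, dist_comm] at hy
      have : z ∈ ⋃ w ∈ s, ball w (ε / 2) :=
        hscov (by rw [mem_closedBall, dist_comm, hdaz])
      rcases mem_iUnion₂.1 this with ⟨w, hw, hwz⟩
      refine mem_iUnion₂.2 ⟨w, hw, ?_⟩
      rw [mem_ball] at hwz ⊢
      have hry : dist a y - r' ≤ ε / 2 := by
        rw [hr'def]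
        rcases le_or_gt 0 (r - ε / 2) with h | h
        · rw [max_eq_right h]; linarith
        · rw [max_eq_left (le_of_lt h)]; linarith
      calc dist y w ≤ dist y z + dist z w := dist_triangle _ _ _
        _ = (dist a y - r') + dist z w := by rw [dist_comm y z, hzy]
        _ < ε / 2 + ε / 2 := add_lt_add_of_le_of_lt hry (by simpa [dist_comm] using hwz)
        _ = ε := by ring
  -- main: every closed ball around a is compact
  have main : ∀ r : ℝ, IsCompact (closedBall a r) := by
    by_contra hmain
    push_neg at hmain
    obtain ⟨R₀, hR₀⟩ := hmain
    set T : Set ℝ := {r | IsCompact (closedBall a r)} with hTdef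
    have hTd : ∀ r ∈ T, ∀ r' ≤ r, r' ∈ T := fun r hr r' hr' =>
      hr.of_isClosed_subset isClosed_closedBall (closedBall_subset_closedBall hr')
    have hTne : T.Nonempty := ⟨0, by
      show IsCompact (closedBall a 0)
      rw [closedBall_zero]; exact isCompact_singleton⟩
    have hTbdd : BddAbove T := ⟨R₀, fun t ht => by
      by_contra hlt
      push_neg at hlt
      exact hR₀ (hTd t ht R₀ (le_of_lt hlt))⟩
    set R := sSup T with hRdef
    obtain ⟨r₀, hr₀pos, hr₀c⟩ := hloc a
    have hRpos : 0 < R := lt_of_lt_of_le hr₀pos (le_csSup hTbdd hr₀c)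
    have hRT : R ∈ T := by
      refine limit R hRpos ?_
      intro r' hr'
      obtain ⟨t, ht, hr't⟩ := exists_lt_of_lt_csSup hTne hr'
      exact hTd t ht r' (le_of_lt hr't)
    obtain ⟨δ, hδpos, hδc⟩ := step_up R (le_of_lt hRpos) hRT
    have : R + δ ≤ R := le_csSup hTbdd hδc
    linarith
  refine ⟨fun x r => ?_⟩
  refine (main (dist a x + max r 0)).of_isClosed_subset isClosed_closedBall ?_
  intro y hy
  rw [mem_closedBall] at hy ⊢
  calc dist y a ≤ dist y x + dist x a := dist_triangle _ _ _
    _ ≤ max r 0 + dist x a := add_le_add_left (le_trans hy (le_max_left _ _)) _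
    _ = dist a x + max r 0 := by rw [dist_comm, add_comm]


open Metric Set

section Blend
variable {E X : Type*} [MetricSpace E] [MetricSpace X]

noncomputable def phiK (δ : ℝ) (K : Set E) (ω : E) : ℝ :=
  max 0 (1 - Metric.infDist ω K / δ)

lemma phiK_nonneg (δ : ℝ) (K : Set E) (ω : E) : 0 ≤ phiK δ K ω := le_max_left _ _

lemma phiK_le_one {δ : ℝ} (hδ : 0 < δ) (K : Set E) (ω : E) : phiK δ K ω ≤ 1 := by
  apply max_le zero_le_one
  have h1 : 0 ≤ Metric.infDist ω K := Metric.infDist_nonneg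
  have : 0 ≤ Metric.infDist ω K / δ := by positivity
  linarith

lemma phiK_lip {δ : ℝ} (hδ : 0 < δ) (K : Set E) (ω ω' : E) :
    |phiK δ K ω - phiK δ K ω'| ≤ dist ω ω' / δ := by
  rw [phiK, phiK, max_comm (0:ℝ), max_comm (0:ℝ)]
  refine le_trans (abs_max_sub_max_le_abs _ _ _) ?_
  have h : dist (Metric.infDist ω K) (Metric.infDist ω' K) ≤ dist ω ω' := by
    simpa using (Metric.lipschitz_infDist_pt K).dist_le_mul ω ω'
  rw [Real.dist_eq] at h
  have heq : (1 - Metric.infDist ω K / δ) - (1 - Metric.infDist ω' K / δ)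
      = (Metric.infDist ω' K - Metric.infDist ω K) / δ := by
    ring
  rw [heq, abs_div, abs_of_pos hδ]
  gcongr
  rw [abs_sub_comm]
  exact h

lemma phiK_eq_one {δ : ℝ} {K : Set E} {ω : E} (hω : ω ∈ K) : phiK δ K ω = 1 := by
  rw [phiK, Metric.infDist_zero_of_mem hω, zero_div, sub_zero, max_eq_right zero_le_one]

lemma phiK_eq_zero {δ : ℝ} (hδ : 0 < δ) {K : Set E} {ω ω' : E}
    (h' : ω' ∈ Metric.thickening δ K) (h : ω ∉ Metric.thickening δ K) : phiK δ K ω = 0 := by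
  have hKne : K.Nonempty := by
    by_contra hKe
    rw [not_nonempty_iff_eq_empty] at hKe
    rw [hKe, Metric.thickening_empty] at h'
    exact h'
  have hge : δ ≤ Metric.infDist ω K := by
    by_contra hlt
    push_neg at hlt
    exact h ((Metric.mem_thickening_iff_infDist_lt hKne).2 hlt)
  rw [phiK, max_eq_left]
  have : 1 ≤ Metric.infDist ω K / δ := (one_le_div hδ).2 hge
  linarith

open Classical in
noncomputable def geoBlend (a : X) (γ : X → ℝ → X) (δ : ℝ) (K : X → Set E) :
    List X → E → X
  | [] => fun _ => a
  | v :: l => fun ω => if ω ∈ Metric.thickening δ (K v)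
      then γ v (phiK δ (K v) ω)
      else geoBlend a γ δ K l ω

variable {a : X} {γ : X → ℝ → X} {δ : ℝ} {K : X → Set E}

lemma geoBlend_dist_le {l : List X} (hδ : 0 < δ) {M : ℝ} (hM0 : 0 ≤ M)
    (hM : ∀ v ∈ l, dist a v ≤ M)
    (hγ0 : ∀ v ∈ l, γ v 0 = a)
    (hγd : ∀ v ∈ l, ∀ s ∈ Icc (0:ℝ) 1, ∀ t ∈ Icc (0:ℝ) 1,
      dist (γ v s) (γ v t) = |s - t| * dist a v) :
    ∀ ω, dist (geoBlend a γ δ K l ω) a ≤ M := by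
  induction l with
  | nil => intro ω; simp [geoBlend, hM0]
  | cons v l ih =>
    intro ω
    simp only [geoBlend]
    split
    · have hmem : phiK δ (K v) ω ∈ Icc (0:ℝ) 1 := ⟨phiK_nonneg _ _ _, phiK_le_one hδ _ _⟩
      have h := hγd v (by simp) (phiK δ (K v) ω) hmem 0 ⟨le_refl 0, zero_le_one⟩
      rw [hγ0 v (by simp)] at h
      rw [h, sub_zero, abs_of_nonneg hmem.1]
      calc phiK δ (K v) ω * dist a v ≤ 1 * M :=
        mul_le_mul hmem.2 (hM v (by simp)) dist_nonneg zero_le_one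
      _ = M := one_mul M
    · exact ih (fun w hw => hM w (by simp [hw])) (fun w hw => hγ0 w (by simp [hw]))
        (fun w hw => hγd w (by simp [hw])) ω

lemma geoBlend_away {l : List X} (hδ : 0 < δ) {M : ℝ} (hM0 : 0 ≤ M)
    (hM : ∀ v ∈ l, dist a v ≤ M)
    (hγ0 : ∀ v ∈ l, γ v 0 = a)
    (hγd : ∀ v ∈ l, ∀ s ∈ Icc (0:ℝ) 1, ∀ t ∈ Icc (0:ℝ) 1,
      dist (γ v s) (γ v t) = |s - t| * dist a v)
    {ω : E} (hout : ∀ w ∈ l, ω ∉ Metric.thickening δ (K w)) :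
    ∀ ω', dist (geoBlend a γ δ K l ω') a ≤ M / δ * dist ω ω' := by
  induction l with
  | nil => intro ω'; simp only [geoBlend, dist_self]; positivity
  | cons v l ih =>
    intro ω'
    simp only [geoBlend]
    split
    · rename_i hmem
      have hz : phiK δ (K v) ω = 0 := phiK_eq_zero hδ hmem (hout v (by simp))
      have hub : phiK δ (K v) ω' ≤ dist ω ω' / δ := by
        have := phiK_lip hδ (K v) ω' ω
        rw [hz, sub_zero] at this
        calc phiK δ (K v) ω' ≤ |phiK δ (K v) ω'| := le_abs_self _
          _ ≤ dist ω' ω / δ := this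
          _ = dist ω ω' / δ := by rw [dist_comm]
      have hmemI : phiK δ (K v) ω' ∈ Icc (0:ℝ) 1 := ⟨phiK_nonneg _ _ _, phiK_le_one hδ _ _⟩
      have h := hγd v (by simp) (phiK δ (K v) ω') hmemI 0 ⟨le_refl 0, zero_le_one⟩
      rw [hγ0 v (by simp)] at h
      rw [h, sub_zero, abs_of_nonneg hmemI.1]
      calc phiK δ (K v) ω' * dist a v ≤ (dist ω ω' / δ) * M :=
        mul_le_mul hub (hM v (by simp)) dist_nonneg (by positivity)
      _ = M / δ * dist ω ω' := by ring
    · exact ih (fun w hw => hM w (by simp [hw])) (fun w hw => hγ0 w (by simp [hw]))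
        (fun w hw => hγd w (by simp [hw])) (fun w hw => hout w (by simp [hw])) ω'

lemma geoBlend_lipschitz {l : List X} (hδ : 0 < δ) {M : ℝ} (hM0 : 0 ≤ M)
    (hM : ∀ v ∈ l, dist a v ≤ M)
    (hγ0 : ∀ v ∈ l, γ v 0 = a)
    (hγd : ∀ v ∈ l, ∀ s ∈ Icc (0:ℝ) 1, ∀ t ∈ Icc (0:ℝ) 1,
      dist (γ v s) (γ v t) = |s - t| * dist a v)
    (hdisj : l.Pairwise (fun v w => Disjoint (Metric.thickening δ (K v))
      (Metric.thickening δ (K w)))) :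
    ∀ ω ω', dist (geoBlend a γ δ K l ω) (geoBlend a γ δ K l ω') ≤
      2 * M / δ * dist ω ω' := by
  induction l with
  | nil => intro ω ω'; simp only [geoBlend, dist_self]; positivity
  | cons v l ih =>
    have hMt : ∀ w ∈ l, dist a w ≤ M := fun w hw => hM w (by simp [hw])
    have hγ0t : ∀ w ∈ l, γ w 0 = a := fun w hw => hγ0 w (by simp [hw])
    have hγdt : ∀ w ∈ l, ∀ s ∈ Icc (0:ℝ) 1, ∀ t ∈ Icc (0:ℝ) 1,
        dist (γ w s) (γ w t) = |s - t| * dist a w := fun w hw => hγd w (by simp [hw])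
    rw [List.pairwise_cons] at hdisj
    -- the one-sided estimate for the cross case
    have cross : ∀ ω ω' : E, ω ∈ Metric.thickening δ (K v) →
        ω' ∉ Metric.thickening δ (K v) →
        dist (γ v (phiK δ (K v) ω)) (geoBlend a γ δ K l ω') ≤ 2 * M / δ * dist ω ω' := by
      intro ω ω' hmem hnmem
      have hz : phiK δ (K v) ω' = 0 := phiK_eq_zero hδ hmem hnmem
      have hub : phiK δ (K v) ω ≤ dist ω ω' / δ := by
        have := phiK_lip hδ (K v) ω ω'
        rw [hz, sub_zero] at this
        exact le_trans (le_abs_self _) this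
      have hmemI : phiK δ (K v) ω ∈ Icc (0:ℝ) 1 := ⟨phiK_nonneg _ _ _, phiK_le_one hδ _ _⟩
      have h1 : dist (γ v (phiK δ (K v) ω)) a ≤ M / δ * dist ω ω' := by
        have h := hγd v (by simp) (phiK δ (K v) ω) hmemI 0 ⟨le_refl 0, zero_le_one⟩
        rw [hγ0 v (by simp)] at h
        rw [h, sub_zero, abs_of_nonneg hmemI.1]
        calc phiK δ (K v) ω * dist a v ≤ (dist ω ω' / δ) * M :=
          mul_le_mul hub (hM v (by simp)) dist_nonneg (by positivity)
        _ = M / δ * dist ω ω' := by ring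
      have hout : ∀ w ∈ l, ω ∉ Metric.thickening δ (K w) := by
        intro w hw
        exact fun hc => ((hdisj.1 w hw).le_bot ⟨hmem, hc⟩)
      have h2 : dist (geoBlend a γ δ K l ω') a ≤ M / δ * dist ω ω' :=
        geoBlend_away hδ hM0 hMt hγ0t hγdt hout ω'
      calc dist (γ v (phiK δ (K v) ω)) (geoBlend a γ δ K l ω')
          ≤ dist (γ v (phiK δ (K v) ω)) a + dist a (geoBlend a γ δ K l ω') :=
            dist_triangle _ _ _
        _ = dist (γ v (phiK δ (K v) ω)) a + dist (geoBlend a γ δ K l ω') a := by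
            rw [dist_comm a]
        _ ≤ M / δ * dist ω ω' + M / δ * dist ω ω' := add_le_add h1 h2
        _ = 2 * M / δ * dist ω ω' := by ring
    intro ω ω'
    simp only [geoBlend]
    split
    · rename_i hmem
      split
      · rename_i hmem'
        have hI : phiK δ (K v) ω ∈ Icc (0:ℝ) 1 := ⟨phiK_nonneg _ _ _, phiK_le_one hδ _ _⟩
        have hI' : phiK δ (K v) ω' ∈ Icc (0:ℝ) 1 := ⟨phiK_nonneg _ _ _, phiK_le_one hδ _ _⟩
        have h := hγd v (by simp) (phiK δ (K v) ω) hI (phiK δ (K v) ω') hI'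
        rw [h]
        calc |phiK δ (K v) ω - phiK δ (K v) ω'| * dist a v
            ≤ (dist ω ω' / δ) * M :=
              mul_le_mul (phiK_lip hδ _ _ _) (hM v (by simp)) dist_nonneg (by positivity)
          _ = M / δ * dist ω ω' := by ring
          _ ≤ 2 * M / δ * dist ω ω' := by gcongr <;> linarith
      · rename_i hmem'
        exact cross ω ω' hmem hmem'
    · rename_i hmem
      split
      · rename_i hmem'
        rw [dist_comm, dist_comm ω ω']
        exact cross ω' ω hmem' hmem
      · exact ih hMt hγ0t hγdt hdisj.2 ω ω'

lemma geoBlend_eq {l : List X} (hδ : 0 < δ)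
    (hγ1 : ∀ v ∈ l, γ v 1 = v)
    {v : X} {ω : E} (hv : v ∈ l) (hω : ω ∈ K v)
    (hother : ∀ w ∈ l, w ≠ v → ω ∉ Metric.thickening δ (K w)) :
    geoBlend a γ δ K l ω = v := by
  induction l with
  | nil => simp at hv
  | cons u l ih =>
    simp only [geoBlend]
    by_cases huv : u = v
    · subst huv
      rw [if_pos (Metric.self_subset_thickening hδ _ hω), phiK_eq_one hω, hγ1 u (by simp)]
    · rw [if_neg (hother u (by simp) huv)]
      have hvl : v ∈ l := by
        rcases List.mem_cons.1 hv with h | h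
        · exact absurd h.symm huv
        · exact h
      exact ih (fun w hw => hγ1 w (by simp [hw])) hvl
        (fun w hw hwv => hother w (by simp [hw]) hwv)

end Blend

open MeasureTheory Set


/-- In a locally compact Hadamard space `X`, the uniformly continuous
maps `Ω → X` are dense in `L^p(Ω, X)`. -/
theorem uniformly_continuous_dense_in_Lp
    {n : ℕ} (hn : 1 ≤ n)
    (Ω : Set (EuclideanSpace ℝ (Fin n))) (hΩo : IsOpen Ω) (hΩb : Bornology.IsBounded Ω)
    {X : Type*} [MetricSpace X] [CompleteSpace X] [LocallyCompactSpace X]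
    [MeasurableSpace X] [BorelSpace X]
    (hgeo : ∀ x y : X, ∃ γ : ℝ → X, γ 0 = x ∧ γ 1 = y ∧
      ∀ s ∈ Icc (0:ℝ) 1, ∀ t ∈ Icc (0:ℝ) 1, dist (γ s) (γ t) = |s - t| * dist x y)
    (h4 : ∀ x y v w : X, dist x v ^ 2 + dist y w ^ 2 ≤
      dist x w ^ 2 + dist y v ^ 2 + 2 * dist x y * dist v w)
    (p : ℝ) (hp : 1 ≤ p)
    (f : EuclideanSpace ℝ (Fin n) → X) (hf : Measurable f)
    (a : X) (hfa : ∫⁻ ω in Ω, ENNReal.ofReal (dist (f ω) a ^ p) < ⊤)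
    (ε : ℝ) (hε : 0 < ε) :
    ∃ h : EuclideanSpace ℝ (Fin n) → X, UniformContinuousOn h Ω ∧
      ∫⁻ ω in Ω, ENNReal.ofReal (dist (f ω) (h ω) ^ p) < ENNReal.ofReal ε := by
  classical
  haveI : ProperSpace X := properSpace_of_geodesic hgeo
  have hp0 : (0:ℝ) ≤ p := le_trans zero_le_one hp
  have hpne : p ≠ 0 := by linarith
  have hΩfin : volume Ω < ⊤ := Bornology.IsBounded.measure_lt_top (μ := volume) hΩb
  -- the target ε'
  set ε' : ℝ := ε / (2 * (2:ℝ) ^ p) with hε'def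
  have h2p : (0:ℝ) < (2:ℝ) ^ p := Real.rpow_pos_of_pos (by norm_num) p
  have hε' : 0 < ε' := by
    rw [hε'def]; positivity
  -- Step 1: simple function approximation
  have happrox : ∃ g : SimpleFunc (EuclideanSpace ℝ (Fin n)) X,
      ∫⁻ ω in Ω, ENNReal.ofReal (dist (f ω) (g ω) ^ p) < ENNReal.ofReal ε' := by
    set gs := fun k => SimpleFunc.approxOn f hf univ a (mem_univ a) k with hgs
    have hT : Filter.Tendsto
        (fun k => ∫⁻ ω in Ω, ENNReal.ofReal (dist (f ω) (gs k ω) ^ p))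
        Filter.atTop (nhds (∫⁻ _ω in Ω, (0:ENNReal))) := by
      apply MeasureTheory.tendsto_lintegral_of_dominated_convergence
        (bound := fun ω => ENNReal.ofReal (dist (f ω) a ^ p))
      · intro k
        exact ENNReal.measurable_ofReal.comp
          ((Real.continuous_rpow_const hp0).measurable.comp (hf.dist (gs k).measurable))
      · intro k
        apply Filter.Eventually.of_forall
        intro ω
        have h1 : dist (f ω) (gs k ω) ≤ dist (f ω) a := by
          have := SimpleFunc.edist_approxOn_le hf (mem_univ a) ω k
          rw [edist_dist, edist_dist] at this
          have := ENNReal.ofReal_le_ofReal_iff dist_nonneg |>.1 this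
          rw [dist_comm (f ω) (gs k ω), dist_comm (f ω) a]
          exact this
        exact ENNReal.ofReal_le_ofReal (Real.rpow_le_rpow dist_nonneg h1 hp0)
      · exact hfa.ne
      · apply Filter.Eventually.of_forall
        intro ω
        have h1 : Filter.Tendsto (fun k => gs k ω) Filter.atTop (nhds (f ω)) :=
          SimpleFunc.tendsto_approxOn hf (mem_univ a) (by simp)
        have h2 : Filter.Tendsto (fun k => dist (f ω) (gs k ω)) Filter.atTop (nhds 0) := by
          have h2' := Filter.Tendsto.dist
            (tendsto_const_nhds : Filter.Tendsto (fun _ : ℕ => f ω) Filter.atTop (nhds (f ω))) h1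
          simpa using h2'
        have h3 : Filter.Tendsto (fun k => dist (f ω) (gs k ω) ^ p) Filter.atTop
            (nhds 0) := by
          have hc : ContinuousAt (fun x : ℝ => x ^ p) 0 :=
            Real.continuousAt_rpow_const 0 p (Or.inr hp0)
          have := hc.tendsto.comp h2
          simpa [Real.zero_rpow hpne, Function.comp_def] using this
        have := (ENNReal.continuous_ofReal.tendsto 0).comp h3
        simpa [Function.comp_def] using this
    rw [lintegral_zero] at hT
    have := hT.eventually_lt_const (ENNReal.ofReal_pos.2 hε')
    obtain ⟨k, hk⟩ := this.exists
    exact ⟨gs k, hk⟩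
  obtain ⟨g, hfg⟩ := happrox
  -- Step 2: data for the blend construction
  set V : Finset X := g.range with hV
  set M : ℝ := ((V.sup fun v => nndist a v : NNReal) : ℝ) with hM
  have hM0 : (0:ℝ) ≤ M := NNReal.coe_nonneg _
  have hMv : ∀ v ∈ V, dist a v ≤ M := by
    intro v hv
    rw [dist_nndist]
    exact_mod_cast Finset.le_sup (f := fun v => nndist a v) hv
  set C : ℝ := (2 * M) ^ p with hC
  have hC0 : 0 ≤ C := Real.rpow_nonneg (by linarith) _
  set D : ENNReal := ((V.card : ENNReal) + 1) * (ENNReal.ofReal C + 1) with hD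
  have hD0 : D ≠ 0 := by
    apply mul_ne_zero
    · exact (lt_of_lt_of_le zero_lt_one le_add_self).ne'
    · exact (lt_of_lt_of_le zero_lt_one le_add_self).ne'
  have hDtop : D ≠ ⊤ := by
    apply ENNReal.mul_ne_top
    · exact ENNReal.add_ne_top.2 ⟨ENNReal.natCast_ne_top _, ENNReal.one_ne_top⟩
    · exact ENNReal.add_ne_top.2 ⟨ENNReal.ofReal_ne_top, ENNReal.one_ne_top⟩
  set η : ENNReal := ENNReal.ofReal ε' / D with hη
  have hη0 : η ≠ 0 :=
    (ENNReal.div_pos (ENNReal.ofReal_pos.2 hε').ne' hDtop).ne'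
  -- the fibers
  set A : X → Set (EuclideanSpace ℝ (Fin n)) := fun v => Ω ∩ g ⁻¹' {v} with hA
  have hAmeas : ∀ v, MeasurableSet (A v) :=
    fun v => hΩo.measurableSet.inter (g.measurableSet_fiber v)
  have hAfin : ∀ v, volume (A v) ≠ ⊤ :=
    fun v => (lt_of_le_of_lt (measure_mono inter_subset_left) hΩfin).ne
  -- compact subsets of the fibers
  have hex : ∀ v : X, ∃ K, K ⊆ A v ∧ IsCompact K ∧ volume (A v \ K) < η :=
    fun v => (hAmeas v).exists_isCompact_diff_lt (hAfin v) hη0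
  choose Kc hKsub hKcomp hKlt using hex
  -- disjointness of the compacts
  have hKdisj : ∀ v w : X, v ≠ w → Disjoint (Kc v) (Kc w) := by
    intro v w hvw
    refine Set.disjoint_of_subset (hKsub v) (hKsub w) ?_
    rw [Set.disjoint_left]
    rintro ω ⟨-, hv⟩ ⟨-, hw⟩
    rw [mem_preimage, mem_singleton_iff] at hv hw
    exact hvw (hv ▸ hw ▸ rfl)
  -- choose δ with pairwise disjoint thickenings
  have hδex : ∃ δ : ℝ, 0 < δ ∧ ∀ v ∈ V, ∀ w ∈ V, v ≠ w →
      Disjoint (Metric.thickening δ (Kc v)) (Metric.thickening δ (Kc w)) := by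
    have hpair : ∀ v w : X, v ≠ w → ∀ᶠ d in nhdsWithin (0:ℝ) (Ioi 0),
        Disjoint (Metric.thickening d (Kc v)) (Metric.thickening d (Kc w)) := by
      intro v w hvw
      obtain ⟨d₀, hd₀, hdis⟩ := (hKdisj v w hvw).exists_thickenings (hKcomp v)
        (hKcomp w).isClosed
      filter_upwards [Ioc_mem_nhdsGT hd₀] with d hd
      exact hdis.mono (Metric.thickening_mono hd.2 _) (Metric.thickening_mono hd.2 _)
    have hall : ∀ᶠ d in nhdsWithin (0:ℝ) (Ioi 0), ∀ v ∈ V, ∀ w ∈ V, v ≠ w →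
        Disjoint (Metric.thickening d (Kc v)) (Metric.thickening d (Kc w)) := by
      rw [Filter.eventually_all_finset]
      intro v hv
      rw [Filter.eventually_all_finset]
      intro w hw
      by_cases hvw : v = w
      · exact Filter.Eventually.of_forall (fun d h => absurd hvw h)
      · filter_upwards [hpair v w hvw] with d hd _
        exact hd
    obtain ⟨δ, hδp, hδd⟩ := (hall.and self_mem_nhdsWithin).exists
    exact ⟨δ, hδd, hδp⟩
  obtain ⟨δ, hδ, hδdisj⟩ := hδex
  -- geodesics from a
  choose γ hγ0 hγ1 hγd using fun v => hgeo a v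
  set L : List X := V.toList with hL
  have hmemL : ∀ v, v ∈ L ↔ v ∈ V := fun v => Finset.mem_toList
  have hpairL : L.Pairwise (fun v w => Disjoint (Metric.thickening δ (Kc v))
      (Metric.thickening δ (Kc w))) := by
    refine List.Pairwise.imp_of_mem ?_ V.nodup_toList
    intro v w hv hw hvw
    exact hδdisj v ((hmemL v).1 hv) w ((hmemL w).1 hw) hvw
  set h : (EuclideanSpace ℝ (Fin n)) → X := geoBlend a γ δ Kc L with hh
  have hMl : ∀ v ∈ L, dist a v ≤ M := fun v hv => hMv v ((hmemL v).1 hv)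
  have hγ0l : ∀ v ∈ L, γ v 0 = a := fun v _ => hγ0 v
  have hγdl : ∀ v ∈ L, ∀ s ∈ Icc (0:ℝ) 1, ∀ t ∈ Icc (0:ℝ) 1,
      dist (γ v s) (γ v t) = |s - t| * dist a v := fun v _ => hγd v
  -- uniform continuity
  have hlip : ∀ ω ω' : EuclideanSpace ℝ (Fin n), dist (h ω) (h ω') ≤ 2 * M / δ * dist ω ω' :=
    geoBlend_lipschitz hδ hM0 hMl hγ0l hγdl hpairL
  have huc : UniformContinuousOn h Ω := by
    have : LipschitzWith ⟨2 * M / δ, by positivity⟩ h :=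
      LipschitzWith.of_dist_le_mul (fun x y => hlip x y)
    exact Filter.Tendsto.mono_left this.uniformContinuous inf_le_left
  refine ⟨h, huc, ?_⟩
  -- pointwise facts
  have hha : ∀ ω : EuclideanSpace ℝ (Fin n), dist (h ω) a ≤ M := geoBlend_dist_le hδ hM0 hMl hγ0l hγdl
  have hgmem : ∀ ω : EuclideanSpace ℝ (Fin n), g ω ∈ V := fun ω => g.mem_range_self ω
  have hga : ∀ ω : EuclideanSpace ℝ (Fin n), dist (g ω) a ≤ M := by
    intro ω
    rw [dist_comm]
    exact hMv _ (hgmem ω)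
  -- on the compacts, h agrees with g
  have hagree : ∀ v ∈ V, ∀ ω ∈ Kc v, h ω = g ω := by
    intro v hv ω hω
    have hgω : g ω = v := by
      have := (hKsub v hω).2
      rwa [mem_preimage, mem_singleton_iff] at this
    rw [hgω, hh]
    refine geoBlend_eq hδ (fun w _ => hγ1 w) ((hmemL v).2 hv) hω ?_
    intro w hw hwv
    intro hmem
    have hd := hδdisj w ((hmemL w).1 hw) v hv hwv
    exact hd.le_bot ⟨hmem, Metric.self_subset_thickening hδ _ hω⟩ |>.elim
  -- the bad set
  set Bad : Set (EuclideanSpace ℝ (Fin n)) := ⋃ v ∈ V, (A v \ Kc v) with hBad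
  have hBadMeas : MeasurableSet Bad :=
    MeasurableSet.biUnion V.countable_toSet
      (fun v _ => (hAmeas v).diff (hKcomp v).isClosed.measurableSet)
  have hBadSmall : volume Bad ≤ (V.card : ENNReal) * η := by
    refine le_trans (measure_biUnion_finset_le V _) ?_
    calc ∑ v ∈ V, volume (A v \ Kc v) ≤ ∑ _v ∈ V, η :=
      Finset.sum_le_sum (fun v _ => (hKlt v).le)
    _ = (V.card : ENNReal) * η := by rw [Finset.sum_const, nsmul_eq_mul]
  -- the g-h error
  have hgh : ∫⁻ ω in Ω, ENNReal.ofReal (dist (g ω) (h ω) ^ p) ≤ ENNReal.ofReal ε' := by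
    have hpt : ∀ ω ∈ Ω, ENNReal.ofReal (dist (g ω) (h ω) ^ p) ≤
        Bad.indicator (fun _ => ENNReal.ofReal C) ω := by
      intro ω hω
      by_cases hωK : ω ∈ Kc (g ω)
      · rw [hagree (g ω) (hgmem ω) ω hωK]
        simp [Real.zero_rpow hpne]
      · have hωBad : ω ∈ Bad := by
          rw [hBad]
          refine mem_biUnion (hgmem ω) ⟨⟨hω, rfl⟩, hωK⟩
        rw [Set.indicator_of_mem hωBad]
        apply ENNReal.ofReal_le_ofReal
        apply Real.rpow_le_rpow dist_nonneg _ hp0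
        calc dist (g ω) (h ω) ≤ dist (g ω) a + dist a (h ω) := dist_triangle _ _ _
          _ ≤ M + M := add_le_add (hga ω) (by rw [dist_comm]; exact hha ω)
          _ = 2 * M := by ring
    calc ∫⁻ ω in Ω, ENNReal.ofReal (dist (g ω) (h ω) ^ p)
        ≤ ∫⁻ ω in Ω, Bad.indicator (fun _ => ENNReal.ofReal C) ω :=
          setLIntegral_mono (measurable_const.indicator hBadMeas) hpt
      _ ≤ ∫⁻ ω, Bad.indicator (fun _ => ENNReal.ofReal C) ω :=
          setLIntegral_le_lintegral _ _
      _ = ENNReal.ofReal C * volume Bad := by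
          rw [lintegral_indicator hBadMeas, setLIntegral_const]
      _ ≤ ENNReal.ofReal C * ((V.card : ENNReal) * η) :=
          mul_le_mul_right hBadSmall _
      _ ≤ D * η := by
          rw [← mul_assoc, hD, mul_comm ((V.card : ENNReal) + 1)]
          exact mul_le_mul_left (mul_le_mul' le_self_add le_self_add) η
      _ = ENNReal.ofReal ε' := by
          rw [hη]
          exact ENNReal.mul_div_cancel hD0 hDtop
  -- combine
  have hmeasF : Measurable fun ω => ENNReal.ofReal (dist (f ω) (g ω) ^ p) :=
    ENNReal.measurable_ofReal.comp
      ((Real.continuous_rpow_const hp0).measurable.comp (hf.dist g.measurable))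
  have hcont : Continuous h := by
    have : LipschitzWith ⟨2 * M / δ, by positivity⟩ h :=
      LipschitzWith.of_dist_le_mul (fun x y => hlip x y)
    exact this.continuous
  have hmeasG : Measurable fun ω => ENNReal.ofReal (dist (g ω) (h ω) ^ p) :=
    ENNReal.measurable_ofReal.comp
      ((Real.continuous_rpow_const hp0).measurable.comp (g.measurable.dist hcont.measurable))
  have hptfinal : ∀ ω : EuclideanSpace ℝ (Fin n), ENNReal.ofReal (dist (f ω) (h ω) ^ p) ≤
      ENNReal.ofReal ((2:ℝ) ^ p) * (ENNReal.ofReal (dist (f ω) (g ω) ^ p) +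
        ENNReal.ofReal (dist (g ω) (h ω) ^ p)) := by
    intro ω
    set x := dist (f ω) (g ω)
    set y := dist (g ω) (h ω)
    have hx : (0:ℝ) ≤ x := dist_nonneg
    have hy : (0:ℝ) ≤ y := dist_nonneg
    have h1 : dist (f ω) (h ω) ^ p ≤ (x + y) ^ p :=
      Real.rpow_le_rpow dist_nonneg (dist_triangle _ _ _) hp0
    have h2 : (x + y) ^ p ≤ (2:ℝ) ^ p * (x ^ p + y ^ p) := by
      have hxy : x + y ≤ 2 * max x y := by
        rcases max_cases x y with ⟨hm, hle⟩ | ⟨hm, hle⟩ <;> rw [hm] <;> linarith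
      calc (x + y) ^ p ≤ (2 * max x y) ^ p :=
          Real.rpow_le_rpow (by linarith) hxy hp0
        _ = (2:ℝ) ^ p * (max x y) ^ p :=
          Real.mul_rpow (by norm_num) (le_max_of_le_left hx)
        _ ≤ (2:ℝ) ^ p * (x ^ p + y ^ p) := by
            apply mul_le_mul_of_nonneg_left _ (le_of_lt h2p)
            rcases max_cases x y with ⟨hm, _⟩ | ⟨hm, _⟩ <;> rw [hm]
            · nlinarith [Real.rpow_nonneg hy p]
            · nlinarith [Real.rpow_nonneg hx p]
    calc ENNReal.ofReal (dist (f ω) (h ω) ^ p)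
        ≤ ENNReal.ofReal ((2:ℝ) ^ p * (x ^ p + y ^ p)) :=
          ENNReal.ofReal_le_ofReal (le_trans h1 h2)
      _ = ENNReal.ofReal ((2:ℝ) ^ p) * (ENNReal.ofReal (x ^ p) +
            ENNReal.ofReal (y ^ p)) := by
          rw [ENNReal.ofReal_mul (le_of_lt h2p),
            ENNReal.ofReal_add (Real.rpow_nonneg hx p) (Real.rpow_nonneg hy p)]
  calc ∫⁻ ω in Ω, ENNReal.ofReal (dist (f ω) (h ω) ^ p)
      ≤ ∫⁻ ω in Ω, ENNReal.ofReal ((2:ℝ) ^ p) * (ENNReal.ofReal (dist (f ω) (g ω) ^ p) +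
          ENNReal.ofReal (dist (g ω) (h ω) ^ p)) :=
        lintegral_mono (fun ω => hptfinal ω)
    _ = ENNReal.ofReal ((2:ℝ) ^ p) * ((∫⁻ ω in Ω, ENNReal.ofReal (dist (f ω) (g ω) ^ p)) +
          ∫⁻ ω in Ω, ENNReal.ofReal (dist (g ω) (h ω) ^ p)) := by
        rw [lintegral_const_mul _ (by exact hmeasF.add hmeasG : Measurable fun ω => ENNReal.ofReal (dist (f ω) (g ω) ^ p) + ENNReal.ofReal (dist (g ω) (h ω) ^ p)), lintegral_add_left hmeasF]
    _ < ENNReal.ofReal ((2:ℝ) ^ p) * (ENNReal.ofReal ε' + ENNReal.ofReal ε') := by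
        rw [ENNReal.mul_lt_mul_iff_right (ENNReal.ofReal_pos.2 h2p).ne' ENNReal.ofReal_ne_top]
        calc (∫⁻ ω in Ω, ENNReal.ofReal (dist (f ω) (g ω) ^ p)) +
              ∫⁻ ω in Ω, ENNReal.ofReal (dist (g ω) (h ω) ^ p)
            ≤ (∫⁻ ω in Ω, ENNReal.ofReal (dist (f ω) (g ω) ^ p)) + ENNReal.ofReal ε' :=
              add_le_add_right hgh _
          _ < ENNReal.ofReal ε' + ENNReal.ofReal ε' :=
              ENNReal.add_lt_add_right ENNReal.ofReal_ne_top hfg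
    _ = ENNReal.ofReal ε := by
        rw [← ENNReal.ofReal_add hε'.le hε'.le, ← ENNReal.ofReal_mul (le_of_lt h2p)]
        congr 1
        rw [hε'def]
        field_simp
        ring
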